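/- Let (X,T) be a compact metric, almost equicontinuous, topologically transitive dynamical system, and let p ∈ A(X,T) be continuous and surjective. Then p is injective, hence a self-homeomorphism of X. Moreover, if a net (T^{n_j}) converges pointwise to p then it converges uniformly to p and (T^{-n_j}) converges uniformly to p^{-1}; in particular p^{-1} ∈ E(X,T), id_X ∈ A(X,T), and E(X,T) = A(X,T) (so (X,T) is weakly rigid). -/

import Mathlib

open Filter Topology

/-- The `n`-th iterate (for `n : ℤ`) of a homeomorphism `T`. -/
def hIter {X : Type*} [TopologicalSpace X] (T : X ≃ₜ X) (n : ℤ) : X → X :=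
  fun x => (T.toEquiv ^ n) x

/-- The enveloping semigroup of `(X,T)`: the closure of `{Tⁿ : n ∈ ℤ}` in `X → X` with
the product (pointwise convergence) topology. -/
def envSG {X : Type*} [TopologicalSpace X] (T : X ≃ₜ X) : Set (X → X) :=
  closure (Set.range (hIter T))

/-- The adherence semigroup of `(X,T)`: the set of limit points of `(Tⁿ)` as `|n| → ∞`. -/
def adhSG {X : Type*} [TopologicalSpace X] (T : X ≃ₜ X) : Set (X → X) :=
  ⋂ N : ℕ, closure {f : X → X | ∃ n : ℤ, (N : ℤ) ≤ |n| ∧ f = hIter T n}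

/-- `x` is an equicontinuity point of `(X,T)`. -/
def EquicontinuityPt {X : Type*} [PseudoMetricSpace X] (T : X ≃ₜ X) (x : X) : Prop :=
  ∀ ε > (0 : ℝ), ∃ δ > (0 : ℝ), ∀ y : X, dist x y < δ → ∀ n : ℤ,
    dist (hIter T n x) (hIter T n y) < ε

section aux
variable {X : Type*} [TopologicalSpace X] (T : X ≃ₜ X)

lemma hIter_add (m n : ℤ) (x : X) : hIter T (m + n) x = hIter T m (hIter T n x) := by
  simp [hIter, zpow_add, Equiv.Perm.mul_apply]

lemma hIter_zero (x : X) : hIter T 0 x = x := by simp [hIter]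

lemma hIter_one (x : X) : hIter T 1 x = T x := by simp [hIter]

lemma hIter_neg_one (x : X) : hIter T (-1) x = T.symm x := by
  simp [hIter, Equiv.Perm.inv_def]

lemma hIter_cont (n : ℤ) : Continuous (hIter T n) := by
  induction n using Int.induction_on with
  | zero => rw [show hIter T 0 = id from funext (hIter_zero T)]; exact continuous_id
  | succ k ih =>
      have : hIter T (k + 1) = fun x => hIter T 1 (hIter T (k : ℤ) x) := by
        funext x; rw [← hIter_add]; norm_num [add_comm]
      rw [this]; simp only [hIter_one]; exact T.continuous.comp ih
  | pred k ih =>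
      have : hIter T (-(k : ℤ) - 1) = fun x => hIter T (-1) (hIter T (-(k : ℤ)) x) := by
        funext x; rw [← hIter_add]; ring_nf
      rw [this]; simp only [hIter_neg_one]; exact T.symm.continuous.comp ih

lemma hIter_cancel (n : ℤ) (x : X) : hIter T n (hIter T (-n) x) = x := by
  rw [← hIter_add]; simp [hIter]

end aux

/-- A compact metric, almost equicontinuous, topologically transitive system: every continuous
surjective element `p` of the adherence semigroup is injective (hence a self-homeomorphism);
any net of iterates converging pointwise to `p` converges uniformly to `p`, the inverse
iterates converge uniformly to `p⁻¹`, and `p⁻¹ ∈ E(X,T)`, `id ∈ A(X,T)`, `E(X,T) = A(X,T)`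
(so the system is weakly rigid). -/
theorem stmt4 {X : Type*} [MetricSpace X] [CompactSpace X] [Nonempty X]
    (T : X ≃ₜ X)
    (hAE : Dense {x : X | EquicontinuityPt T x})
    (htrans : ∀ U V : Set X, IsOpen U → IsOpen V → U.Nonempty → V.Nonempty →
      ∃ n : ℤ, (hIter T n '' U ∩ V).Nonempty)
    (p : X → X) (hp : p ∈ adhSG T) (hcont : Continuous p) (hsurj : Function.Surjective p) :
    Function.Injective p ∧
    ∃ g : X → X, Function.LeftInverse g p ∧ Function.RightInverse g p ∧
      g ∈ envSG T ∧ id ∈ adhSG T ∧ envSG T = adhSG T ∧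
      ∀ {ι : Type} (l : Filter ι) (n : ι → ℤ),
        Tendsto (fun j => hIter T (n j)) l (nhds p) →
          TendstoUniformly (fun j => hIter T (n j)) p l ∧
          TendstoUniformly (fun j => hIter T (-(n j))) g l := by
  classical
  -- notation for the sets appearing in adhSG
  set S : ℕ → Set (X → X) := fun N => {f : X → X | ∃ n : ℤ, (N : ℤ) ≤ |n| ∧ f = hIter T n}
    with hS
  have hpS : ∀ N : ℕ, p ∈ closure (S N) := by
    intro N
    have := hp
    simp only [adhSG, Set.mem_iInter] at this
    exact this N
  -- two point approximation with |n| ≥ N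
  have approx : ∀ (x y : X) (ε : ℝ), 0 < ε → ∀ N : ℕ, ∃ n : ℤ, (N : ℤ) ≤ |n| ∧
      dist (hIter T n x) (p x) < ε ∧ dist (hIter T n y) (p y) < ε := by
    intro x y ε hε N
    set O : Set (X → X) := ((fun g : X → X => g x) ⁻¹' Metric.ball (p x) ε) ∩
      ((fun g : X → X => g y) ⁻¹' Metric.ball (p y) ε) with hO
    have hOopen : IsOpen O :=
      (Metric.isOpen_ball.preimage (continuous_apply x)).inter
        (Metric.isOpen_ball.preimage (continuous_apply y))
    have hpO : p ∈ O := by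
      constructor <;> simp [Metric.mem_ball, hε]
    obtain ⟨q, hqO, hqS⟩ := _root_.mem_closure_iff.mp (hpS N) O hOopen hpO
    obtain ⟨n, hn, rfl⟩ := hqS
    exact ⟨n, hn, by simpa [Metric.mem_ball] using hqO.1, by simpa [Metric.mem_ball] using hqO.2⟩
  -- p commutes with T
  have comm1 : ∀ x : X, p (T x) = T (p x) := by
    intro x
    have key : ∀ ε : ℝ, 0 < ε → dist (p (T x)) (T (p x)) ≤ ε := by
      intro ε hε
      obtain ⟨δ, hδ, hδc⟩ := Metric.continuous_iff.mp T.continuous (p x) (ε / 2) (by linarith)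
      obtain ⟨n, _, h1, h2⟩ := approx (T x) x (min (ε / 2) δ) (by positivity) 0
      have e1 : hIter T n (T x) = T (hIter T n x) := by
        rw [← hIter_one T x, ← hIter_add, add_comm, hIter_add, hIter_one]
      have h2' : dist (hIter T n x) (p x) < δ := lt_of_lt_of_le h2 (min_le_right _ _)
      have h1' : dist (hIter T n (T x)) (p (T x)) < ε / 2 :=
        lt_of_lt_of_le h1 (min_le_left _ _)
      calc dist (p (T x)) (T (p x))
          ≤ dist (p (T x)) (T (hIter T n x)) + dist (T (hIter T n x)) (T (p x)) :=
            dist_triangle _ _ _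
        _ ≤ ε / 2 + ε / 2 := by
            refine add_le_add ?_ (le_of_lt (hδc _ h2'))
            rw [dist_comm, ← e1]; exact le_of_lt h1'
        _ = ε := by ring
    have : dist (p (T x)) (T (p x)) ≤ 0 :=
      le_of_forall_pos_le_add (by intro ε hε; simpa using key ε hε)
    exact eq_of_dist_eq_zero (le_antisymm this dist_nonneg)
  have comm1' : ∀ x : X, p (T.symm x) = T.symm (p x) := by
    intro x
    have := comm1 (T.symm x)
    rw [T.apply_symm_apply] at this
    rw [this, T.symm_apply_apply]
  have commZ : ∀ (n : ℤ) (x : X), p (hIter T n x) = hIter T n (p x) := by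
    intro n
    induction n using Int.induction_on with
    | zero => intro x; simp [hIter_zero]
    | succ k ih =>
        intro x
        have e : ((k : ℤ) + 1) = 1 + (k : ℤ) := by ring
        rw [e, hIter_add, hIter_add, hIter_one, hIter_one, comm1, ih]
    | pred k ih =>
        intro x
        have e : (-(k : ℤ) - 1) = (-1) + (-(k : ℤ)) := by ring
        rw [e, hIter_add, hIter_add, hIter_neg_one, hIter_neg_one, comm1', ih]
  -- a transitive point exists (Baire)
  obtain ⟨b, hbc, hbne, hbasis⟩ := TopologicalSpace.exists_countable_basis X
  have hUdense : ∀ U ∈ b, Dense (⋃ n : ℤ, (hIter T n) ⁻¹' U) := by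
    intro U hU
    rw [dense_iff_inter_open]
    intro V hVopen hVne
    have hUopen : IsOpen U := hbasis.isOpen hU
    have hUne : U.Nonempty := Set.nonempty_iff_ne_empty.mpr (by rintro rfl; exact hbne hU)
    obtain ⟨n, z, hz⟩ := htrans V U hVopen hUopen hVne hUne
    obtain ⟨⟨w, hwV, rfl⟩, hzU⟩ := hz
    exact ⟨w, hwV, Set.mem_iUnion.mpr ⟨n, hzU⟩⟩
  have : Dense (⋂ U ∈ b, ⋃ n : ℤ, (hIter T n) ⁻¹' U) := by
    rw [Set.biInter_eq_iInter]
    haveI : Countable ↥b := hbc.to_subtype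
    exact dense_iInter_of_isOpen
      (fun U => isOpen_iUnion (fun n => (hbasis.isOpen U.2).preimage (hIter_cont T n)))
      (fun U => hUdense U U.2)
  obtain ⟨x₀, hx₀⟩ := this.nonempty
  have hx₀dense : Dense (Set.range fun n : ℤ => hIter T n x₀) := by
    rw [dense_iff_inter_open]
    intro V hVopen hVne
    obtain ⟨v, hv⟩ := hVne
    obtain ⟨U, hUb, hvU, hUV⟩ := hbasis.exists_subset_of_mem_open hv hVopen
    have := Set.mem_iInter₂.mp hx₀ U hUb
    obtain ⟨n, hn⟩ := Set.mem_iUnion.mp this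
    exact ⟨hIter T n x₀, hUV hn, ⟨n, rfl⟩⟩
  -- the orbit of p x₀ is dense too
  have hpx₀dense : Dense (Set.range fun n : ℤ => hIter T n (p x₀)) := by
    rw [dense_iff_inter_open]
    intro V hVopen hVne
    have hpreV : IsOpen (p ⁻¹' V) := hVopen.preimage hcont
    have hpreVne : (p ⁻¹' V).Nonempty := by
      obtain ⟨v, hv⟩ := hVne
      obtain ⟨u, rfl⟩ := hsurj v
      exact ⟨u, hv⟩
    obtain ⟨w, ⟨m, rfl⟩, hw⟩ := hx₀dense.exists_mem_open hpreV hpreVne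
    refine ⟨p (hIter T m x₀), hw, ⟨m, ?_⟩⟩
    rw [commZ]
  -- p x₀ is a (weak) equicontinuity point
  have EqPz : ∀ ε : ℝ, 0 < ε → ∃ δ > (0 : ℝ), ∀ y : X, dist (p x₀) y < δ →
      ∀ n : ℤ, dist (hIter T n (p x₀)) (hIter T n y) ≤ ε := by
    intro ε hε
    obtain ⟨e, he⟩ := hAE.nonempty
    obtain ⟨δe, hδe, hEqe⟩ := he (ε / 2) (by linarith)
    obtain ⟨w, ⟨m, rfl⟩, hwball⟩ := hpx₀dense.exists_mem_open Metric.isOpen_ball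
      ⟨e, Metric.mem_ball_self (by linarith : (0:ℝ) < δe / 2)⟩
    obtain ⟨δ, hδ, hδc⟩ := Metric.continuous_iff.mp (hIter_cont T m) (p x₀) (δe / 2)
      (by linarith)
    refine ⟨δ, hδ, fun y hy n => ?_⟩
    have hmy : dist (hIter T m (p x₀)) (hIter T m y) < δe / 2 := by
      rw [dist_comm]; exact hδc y (by rw [dist_comm]; exact hy)
    have hew : dist e (hIter T m (p x₀)) < δe / 2 := by
      rw [dist_comm]; exact Metric.mem_ball.mp hwball
    have hey : dist e (hIter T m y) < δe :=
      lt_of_le_of_lt (dist_triangle e (hIter T m (p x₀)) (hIter T m y)) (by linarith)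
    have h1 : ∀ k : ℤ, dist (hIter T k e) (hIter T k (hIter T m (p x₀))) < ε / 2 :=
      fun k => hEqe _ (lt_of_lt_of_le hew (by linarith)) k
    have h2 : ∀ k : ℤ, dist (hIter T k e) (hIter T k (hIter T m y)) < ε / 2 :=
      fun k => hEqe _ hey k
    have key : ∀ k : ℤ, dist (hIter T k (hIter T m (p x₀))) (hIter T k (hIter T m y)) ≤ ε := by
      intro k
      calc dist (hIter T k (hIter T m (p x₀))) (hIter T k (hIter T m y))
          ≤ dist (hIter T k (hIter T m (p x₀))) (hIter T k e) +
            dist (hIter T k e) (hIter T k (hIter T m y)) := dist_triangle _ _ _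
        _ ≤ ε / 2 + ε / 2 := by
            refine add_le_add ?_ (le_of_lt (h2 k))
            rw [dist_comm]; exact le_of_lt (h1 k)
        _ = ε := by ring
    have := key (n - m)
    rwa [← hIter_add, ← hIter_add, sub_add_cancel] at this
  -- the central quantitative lemma
  have KEYQ : ∀ ε : ℝ, 0 < ε → ∃ δ > (0 : ℝ), ∀ k : ℤ,
      dist (hIter T k x₀) (p x₀) < δ →
      (∀ u : X, dist (hIter T k u) (p u) ≤ ε) ∧
      (∀ u : X, dist (hIter T (-k) (p u)) u ≤ ε) := by
    intro ε hε
    obtain ⟨δ, hδ, hδp⟩ := EqPz ε hε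
    refine ⟨δ, hδ, fun k hk => ?_⟩
    have Q : ∀ n : ℤ, dist (hIter T n (p x₀)) (hIter T n (hIter T k x₀)) ≤ ε :=
      hδp (hIter T k x₀) (by rw [dist_comm]; exact hk)
    constructor
    · -- uniform closeness of T^k and p
      have horb : ∀ m : ℤ, dist (hIter T k (hIter T m x₀)) (p (hIter T m x₀)) ≤ ε := by
        intro m
        have e1 : hIter T k (hIter T m x₀) = hIter T m (hIter T k x₀) := by
          rw [← hIter_add, add_comm, hIter_add]
        rw [e1, commZ, dist_comm]
        exact Q m
      have hclosed : IsClosed {u : X | dist (hIter T k u) (p u) ≤ ε} :=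
        isClosed_le (Continuous.dist (hIter_cont T k) hcont) continuous_const
      have hsub : (Set.range fun m : ℤ => hIter T m x₀) ⊆
          {u : X | dist (hIter T k u) (p u) ≤ ε} := by
        rintro _ ⟨m, rfl⟩; exact horb m
      intro u
      exact closure_minimal hsub hclosed (hx₀dense u)
    · have horb : ∀ m : ℤ, dist (hIter T (-k) (p (hIter T m x₀))) (hIter T m x₀) ≤ ε := by
        intro m
        have e1 : hIter T (-k) (p (hIter T m x₀)) = hIter T (m - k) (p x₀) := by
          rw [commZ, ← hIter_add]; congr 1; ring
        have e2 : hIter T m x₀ = hIter T (m - k) (hIter T k x₀) := by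
          rw [← hIter_add]; congr 1; ring
        rw [e1, e2]
        exact Q (m - k)
      have hclosed : IsClosed {u : X | dist (hIter T (-k) (p u)) u ≤ ε} :=
        isClosed_le (Continuous.dist ((hIter_cont T (-k)).comp hcont) continuous_id)
          continuous_const
      have hsub : (Set.range fun m : ℤ => hIter T m x₀) ⊆
          {u : X | dist (hIter T (-k) (p u)) u ≤ ε} := by
        rintro _ ⟨m, rfl⟩; exact horb m
      intro u
      exact closure_minimal hsub hclosed (hx₀dense u)
  -- existence of good times of arbitrarily large absolute value
  have KEY : ∀ (N : ℕ) (ε : ℝ), 0 < ε → ∃ m : ℤ, (N : ℤ) ≤ |m| ∧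
      (∀ u : X, dist (hIter T m u) (p u) ≤ ε) ∧
      (∀ u : X, dist (hIter T (-m) (p u)) u ≤ ε) := by
    intro N ε hε
    obtain ⟨δ, hδ, hQ⟩ := KEYQ ε hε
    obtain ⟨m, hm, h1, _⟩ := approx x₀ x₀ δ hδ N
    exact ⟨m, hm, hQ m h1⟩
  -- injectivity
  have hinj : Function.Injective p := by
    intro a b hab
    have key : ∀ ε : ℝ, 0 < ε → dist a b ≤ ε := by
      intro ε hε
      obtain ⟨m, _, _, h2⟩ := KEY 0 (ε / 2) (by linarith)
      calc dist a b ≤ dist a (hIter T (-m) (p a)) + dist (hIter T (-m) (p a)) b :=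
            dist_triangle _ _ _
        _ ≤ ε / 2 + ε / 2 := by
            refine add_le_add ?_ ?_
            · rw [dist_comm]; exact h2 a
            · rw [hab]; exact h2 b
        _ = ε := by ring
    have : dist a b ≤ 0 := le_of_forall_pos_le_add (by intro ε hε; simpa using key ε hε)
    exact eq_of_dist_eq_zero (le_antisymm this dist_nonneg)
  -- the inverse map
  set E : X ≃ X := Equiv.ofBijective p ⟨hinj, hsurj⟩ with hE
  have hEcoe : ⇑E = p := rfl
  have homeo : X ≃ₜ X := Continuous.homeoOfEquivCompactToT2 (f := E) hcont
  set g : X → X := ⇑E.symm with hg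
  have hgp : Function.LeftInverse g p := fun x => E.symm_apply_apply x
  have hpg : Function.RightInverse g p := fun x => E.apply_symm_apply x
  have hgcont : Continuous g := (Continuous.homeoOfEquivCompactToT2 (f := E) hcont).symm.continuous
  have hguc := Metric.uniformContinuous_iff.mp (CompactSpace.uniformContinuous_of_continuous hgcont)
  -- rigidity times
  have RIG : ∀ (N : ℕ) (ε : ℝ), 0 < ε → ∃ r : ℤ, (N : ℤ) ≤ |r| ∧
      ∀ u : X, dist (hIter T r u) u ≤ ε := by
    intro N ε hε
    obtain ⟨m', _, _, h2'⟩ := KEY 0 (ε / 2) (by linarith)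
    obtain ⟨m, hm, h1, _⟩ := KEY (N + m'.natAbs) (ε / 2) (by linarith)
    refine ⟨m - m', ?_, ?_⟩
    · have habs : |m| - |m'| ≤ |m - m'| := abs_sub_abs_le_abs_sub m m'
      have hc1 : ((N : ℤ) + (m'.natAbs : ℤ)) ≤ |m| := by push_cast at hm ⊢; exact hm
      have hc2 : (m'.natAbs : ℤ) = |m'| := Int.natCast_natAbs m'
      linarith
    · intro u
      have e1 : hIter T (m - m') u = hIter T m (hIter T (-m') u) := by
        rw [sub_eq_add_neg, hIter_add]
      calc dist (hIter T (m - m') u) u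
          ≤ dist (hIter T m (hIter T (-m') u)) (p (hIter T (-m') u)) +
            dist (p (hIter T (-m') u)) u := by rw [e1]; exact dist_triangle _ _ _
        _ ≤ ε / 2 + ε / 2 := by
            refine add_le_add (h1 _) ?_
            rw [commZ]; exact h2' u
        _ = ε := by ring
  -- id ∈ adhSG
  have idAdh : id ∈ adhSG T := by
    simp only [adhSG, Set.mem_iInter]
    intro N
    choose r hr1 hr2 using fun k : ℕ => RIG N (1 / (k + 1)) (by positivity)
    refine mem_closure_of_tendsto (f := fun k : ℕ => hIter T (r k)) (b := atTop) ?_ ?_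
    · rw [tendsto_pi_nhds]
      intro x
      rw [tendsto_iff_dist_tendsto_zero]
      refine squeeze_zero (fun k => dist_nonneg) (fun k => ?_)
        tendsto_one_div_add_atTop_nhds_zero_nat
      exact hr2 k x
    · exact Eventually.of_forall (fun k => ⟨r k, hr1 k, rfl⟩)
  -- g ∈ envSG
  have hgEnv : g ∈ envSG T := by
    choose m _ _ hm3 using fun k : ℕ => KEY 0 (1 / (k + 1)) (by positivity)
    refine mem_closure_of_tendsto (f := fun k : ℕ => hIter T (-(m k))) (b := atTop) ?_ ?_
    · rw [tendsto_pi_nhds]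
      intro x
      rw [tendsto_iff_dist_tendsto_zero]
      refine squeeze_zero (fun k => dist_nonneg) (fun k => ?_)
        tendsto_one_div_add_atTop_nhds_zero_nat
      have := hm3 k (g x)
      rwa [hpg x] at this
    · exact Eventually.of_forall (fun k => ⟨-(m k), rfl⟩)
  -- envSG = adhSG
  have hEA : envSG T = adhSG T := by
    apply Set.Subset.antisymm
    · intro f hf
      simp only [adhSG, Set.mem_iInter]
      intro N
      rw [mem_closure_iff_nhds]
      intro t ht
      rw [nhds_pi] at ht
      obtain ⟨I, hIfin, V, hV, hVt⟩ := Filter.mem_pi.mp ht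
      -- a uniform radius on I
      choose εi hεi hball using fun i => Metric.mem_nhds_iff.mp (hV i)
      obtain ⟨ε₀, hε₀, hball₀⟩ : ∃ ε₀ > (0 : ℝ), ∀ i ∈ I, Metric.ball (f i) ε₀ ⊆ V i := by
        rcases Set.eq_empty_or_nonempty I with rfl | hIne
        · exact ⟨1, one_pos, fun i hi => absurd hi (Set.notMem_empty i)⟩
        · have hFne : hIfin.toFinset.Nonempty := by
            rwa [Set.Finite.toFinset_nonempty]
          refine ⟨hIfin.toFinset.inf' hFne εi, ?_, ?_⟩
          · exact (Finset.lt_inf'_iff hFne).mpr (fun i _ => hεi i)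
          · intro i hi
            refine subset_trans (Metric.ball_subset_ball ?_) (hball i)
            exact Finset.inf'_le εi (hIfin.mem_toFinset.mpr hi)
      set W : Set (X → X) := ⋂ i ∈ I, {h : X → X | dist (h i) (f i) < ε₀ / 2} with hW
      have hWopen : IsOpen W := by
        refine hIfin.isOpen_biInter (fun i _ => ?_)
        have e0 : {h : X → X | dist (h i) (f i) < ε₀ / 2} =
            (fun h : X → X => h i) ⁻¹' Metric.ball (f i) (ε₀ / 2) := rfl
        rw [e0]
        exact Metric.isOpen_ball.preimage (continuous_apply i)
      have hfW : f ∈ W := by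
        simp only [hW, Set.mem_iInter, Set.mem_setOf_eq]
        intro i _
        simp [hε₀]
      obtain ⟨q, hqW, k, rfl⟩ := _root_.mem_closure_iff.mp hf W hWopen hfW
      obtain ⟨δ, hδ, hδc⟩ := Metric.uniformContinuous_iff.mp
        (CompactSpace.uniformContinuous_of_continuous (hIter_cont T k)) (ε₀ / 2) (by linarith)
      obtain ⟨r, hr1, hr2⟩ := RIG (N + k.natAbs) (δ / 2) (by linarith)
      refine ⟨hIter T (k + r), hVt ?_, ⟨k + r, ?_, rfl⟩⟩
      · rw [Set.mem_pi]
        intro i hi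
        refine hball₀ i hi ?_
        rw [Metric.mem_ball]
        have hqi : dist (hIter T k i) (f i) < ε₀ / 2 := by
          have := Set.mem_iInter₂.mp hqW i hi
          exact this
        have e1 : hIter T (k + r) i = hIter T k (hIter T r i) := hIter_add T k r i
        have h3 : dist (hIter T r i) i < δ := lt_of_le_of_lt (hr2 i) (by linarith)
        calc dist (hIter T (k + r) i) (f i)
            ≤ dist (hIter T k (hIter T r i)) (hIter T k i) + dist (hIter T k i) (f i) := by
              rw [e1]; exact dist_triangle _ _ _
          _ < ε₀ / 2 + ε₀ / 2 := add_lt_add (hδc h3) hqi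
          _ = ε₀ := by ring
      · have habs : |r| - |k| ≤ |k + r| := by
          have := abs_sub_abs_le_abs_sub r (-k)
          rw [abs_neg, sub_neg_eq_add, add_comm] at this
          exact this
        have : ((N : ℤ) + (k.natAbs : ℤ)) ≤ |r| := by exact_mod_cast hr1
        have : (k.natAbs : ℤ) = |k| := Int.natCast_natAbs k
        omega
    · intro f hf
      have h0 := Set.mem_iInter.mp hf 0
      refine closure_mono ?_ h0
      rintro q ⟨n, _, rfl⟩
      exact ⟨n, rfl⟩
  -- final uniform convergence statements
  refine ⟨hinj, g, hgp, hpg, hgEnv, idAdh, hEA, ?_⟩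
  intro ι l n hl
  constructor
  · rw [Metric.tendstoUniformly_iff]
    intro ε hε
    obtain ⟨δ, hδ, hQ⟩ := KEYQ (ε / 2) (by linarith)
    have hx : Tendsto (fun j => hIter T (n j) x₀) l (nhds (p x₀)) := tendsto_pi_nhds.mp hl x₀
    have hev : ∀ᶠ j in l, dist (hIter T (n j) x₀) (p x₀) < δ :=
      Metric.tendsto_nhds.mp hx δ hδ
    filter_upwards [hev] with j hj
    intro x
    have := (hQ (n j) hj).1 x
    rw [dist_comm]
    linarith
  · rw [Metric.tendstoUniformly_iff]
    intro ε hε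
    obtain ⟨δg, hδg, hgc⟩ := hguc ε hε
    obtain ⟨δ, hδ, hQ⟩ := KEYQ (δg / 2) (by linarith)
    have hx : Tendsto (fun j => hIter T (n j) x₀) l (nhds (p x₀)) := tendsto_pi_nhds.mp hl x₀
    have hev : ∀ᶠ j in l, dist (hIter T (n j) x₀) (p x₀) < δ :=
      Metric.tendsto_nhds.mp hx δ hδ
    filter_upwards [hev] with j hj
    intro x
    have h2 := (hQ (n j) hj).2 x
    have e1 : hIter T (-(n j)) x = g (hIter T (-(n j)) (p x)) := by
      rw [← commZ, hgp]
    rw [e1]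
    have : dist x (hIter T (-(n j)) (p x)) < δg := by
      rw [dist_comm]; linarith
    exact hgc this
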